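/- (Lemma 3.8(ii), congruence case.) Let k ≥ 1 and μ ∈ ℂ with 0 ≠ μ ≠ (−1)^{k+1}. Then H_{2k}(μ) belongs to the closure of the set { P (H_2(μ̃_1) ⊕ ⋯ ⊕ H_2(μ̃_k)) Pᵀ : P ∈ ℂ^{2k×2k} invertible, each μ̃_i satisfies |μ̃_i| > 1 or μ̃_i = e^{iθ} with 0 < θ < π, and μ̃_i ≠ μ̃_{i'} for i ≠ i' }. -/

import Mathlib

open Matrix

noncomputable section

/-- The `k × k` Jordan block `J_k(μ)` (eigenvalue `μ` on the diagonal, `1` on the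
superdiagonal). -/
def Jblock (k : ℕ) (μ : ℂ) : Matrix (Fin k) (Fin k) ℂ :=
  Matrix.of fun i j =>
    if (j : ℕ) = (i : ℕ) then μ else if (j : ℕ) = (i : ℕ) + 1 then 1 else 0

/-- The `k × k` matrix `Γ_k`: in 1-based indexing, the `(i,j)` entry is `(-1)^(k-i)`
when `j = k+1-i` or `j = k+2-i`, and `0` otherwise. -/
def Gamma (k : ℕ) : Matrix (Fin k) (Fin k) ℂ :=
  Matrix.of fun i j =>
    if (i : ℕ) + (j : ℕ) = k - 1 ∨ (i : ℕ) + (j : ℕ) = k then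
      (-1 : ℂ) ^ (k - 1 - (i : ℕ)) else 0

/-- Block-diagonal direct sum of two square complex matrices. -/
def dsum {m n : ℕ} (A : Matrix (Fin m) (Fin m) ℂ) (B : Matrix (Fin n) (Fin n) ℂ) :
    Matrix (Fin (m + n)) (Fin (m + n)) ℂ :=
  Matrix.reindex finSumFinEquiv finSumFinEquiv (Matrix.fromBlocks A 0 0 B)

/-- The `2k × 2k` matrix `H_{2k}(μ) = [[0, I_k], [J_k(μ), 0]]`. -/
def Hblock (k : ℕ) (μ : ℂ) : Matrix (Fin (k + k)) (Fin (k + k)) ℂ :=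
  Matrix.reindex finSumFinEquiv finSumFinEquiv (Matrix.fromBlocks 0 1 (Jblock k μ) 0)

/-- The total size of a family of sizes `p : Fin q → ℕ`. -/
def finSize : {q : ℕ} → (Fin q → ℕ) → ℕ
  | 0, _ => 0
  | _ + 1, p => p 0 + finSize fun i => p i.succ

/-- Block-diagonal direct sum of a family of square complex matrices of sizes
`p 0, …, p (q-1)`. -/
def finDsum : {q : ℕ} → (p : Fin q → ℕ) →
    ((i : Fin q) → Matrix (Fin (p i)) (Fin (p i)) ℂ) →
    Matrix (Fin (finSize p)) (Fin (finSize p)) ℂ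
  | 0, _, _ => 0
  | _ + 1, p, M => dsum (M 0) (finDsum (fun i => p i.succ) fun i => M i.succ)

/-- The `2 × 2` block `H_2(μ) = [[0, 1], [μ, 0]]`. -/
def H2 (μ : ℂ) : Matrix (Fin 2) (Fin 2) ℂ := !![0, 1; μ, 0]

/-- The block-diagonal direct sum `H_2(μ_1) ⊕ ⋯ ⊕ H_2(μ_r)`. -/
def pairH (r : ℕ) (mu : Fin r → ℂ) :
    Matrix (Fin (finSize fun _ : Fin r => 2)) (Fin (finSize fun _ : Fin r => 2)) ℂ :=
  finDsum (fun _ => 2) fun i => H2 (mu i)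

/-- A complex number `μ` is a valid Type II-(a) parameter when `|μ| > 1` or
`μ = e^(iθ)` with `0 < θ < π`. -/
def TypeIIaParam (μ : ℂ) : Prop :=
  1 < ‖μ‖ ∨ ∃ θ : ℝ, 0 < θ ∧ θ < Real.pi ∧ μ = Complex.exp ((θ : ℂ) * Complex.I)

lemma finSumFinEquiv_symm_eq {m n : ℕ} (i : Fin (m + n)) :
    finSumFinEquiv.symm i = if h : (i : ℕ) < m then Sum.inl ⟨i, h⟩
      else Sum.inr ⟨(i : ℕ) - m, by omega⟩ := by
  split_ifs with h
  · rw [Equiv.symm_apply_eq, finSumFinEquiv_apply_left]; ext; simp only [Fin.coe_castAdd]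
  · rw [Equiv.symm_apply_eq, finSumFinEquiv_apply_right]; ext; simp only [Fin.coe_natAdd]; omega

lemma reindex_fromBlocks_apply {m n : ℕ}
    (A : Matrix (Fin m) (Fin m) ℂ) (B : Matrix (Fin m) (Fin n) ℂ)
    (C : Matrix (Fin n) (Fin m) ℂ) (D : Matrix (Fin n) (Fin n) ℂ)
    (i j : Fin (m + n)) :
    (Matrix.reindex finSumFinEquiv finSumFinEquiv (Matrix.fromBlocks A B C D)) i j =
      if hi : (i : ℕ) < m then
        (if hj : (j : ℕ) < m then A ⟨i, hi⟩ ⟨j, hj⟩ else B ⟨i, hi⟩ ⟨(j : ℕ) - m, by omega⟩)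
      else
        (if hj : (j : ℕ) < m then C ⟨(i : ℕ) - m, by omega⟩ ⟨j, hj⟩
          else D ⟨(i : ℕ) - m, by omega⟩ ⟨(j : ℕ) - m, by omega⟩) := by
  simp only [Matrix.reindex_apply, Matrix.submatrix_apply, finSumFinEquiv_symm_eq]
  split_ifs with hi hj hj <;> rfl

lemma dsum_apply {m n : ℕ} (A : Matrix (Fin m) (Fin m) ℂ) (B : Matrix (Fin n) (Fin n) ℂ)
    (i j : Fin (m + n)) :
    dsum A B i j =
      if hi : (i : ℕ) < m then
        (if hj : (j : ℕ) < m then A ⟨i, hi⟩ ⟨j, hj⟩ else 0)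
      else
        (if hj : (j : ℕ) < m then 0
          else B ⟨(i : ℕ) - m, by omega⟩ ⟨(j : ℕ) - m, by omega⟩) := by
  rw [dsum, reindex_fromBlocks_apply]
  split_ifs <;> rfl

lemma finSize_two (k : ℕ) : finSize (fun _ : Fin k => 2) = k + k := by
  induction k with
  | zero => rfl
  | succ q ih => show 2 + finSize (fun _ : Fin q => 2) = _; omega

lemma H2_apply (μ : ℂ) (a b : Fin 2) :
    H2 μ a b = if (a : ℕ) = 0 ∧ (b : ℕ) = 1 then 1
      else if (a : ℕ) = 1 ∧ (b : ℕ) = 0 then μ else 0 := by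
  fin_cases a <;> fin_cases b <;> simp [H2]

/-- entrywise description of `pairH`. -/
lemma pairH_apply (k : ℕ) (ν : ℕ → ℂ)
    (i j : Fin (finSize fun _ : Fin k => 2)) :
    pairH k (fun i => ν (i : ℕ)) i j =
      (if (i : ℕ) % 2 = 0 ∧ (j : ℕ) = (i : ℕ) + 1 then 1
        else if (j : ℕ) % 2 = 0 ∧ (i : ℕ) = (j : ℕ) + 1 then ν ((j : ℕ) / 2) else 0) := by
  induction k generalizing ν with
  | zero => exact absurd i.isLt (by simp [finSize])
  | succ q ih =>
    have hi := i.isLt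
    have hj := j.isLt
    show dsum (H2 (ν 0)) (finDsum _ _) i j = _
    have h2 : pairH q (fun i : Fin q => ν ((i : ℕ) + 1)) =
        finDsum (fun _ : Fin q => 2) (fun i => H2 (ν ((i : ℕ) + 1))) := rfl
    refine (dsum_apply (H2 (ν 0)) _ i j).trans ?_
    by_cases h1 : (i : ℕ) < 2 <;> by_cases h3 : (j : ℕ) < 2
    · rw [dif_pos h1, dif_pos h3, H2_apply]
      show (if (i:ℕ) = 0 ∧ (j:ℕ) = 1 then 1 else if (i:ℕ) = 1 ∧ (j:ℕ) = 0 then ν 0 else 0) = _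
      split_ifs <;> first | rfl | omega | (congr 1; omega)
    · rw [dif_pos h1, dif_neg h3, eq_comm]
      split_ifs <;> first | rfl | omega
    · rw [dif_neg h1, dif_pos h3, eq_comm]
      split_ifs <;> first | rfl | omega
    · rw [dif_neg h1, dif_neg h3]
      show pairH q (fun n : Fin q => ν ((n : ℕ) + 1)) ⟨(i:ℕ) - 2, by
          have h4 := finSize_two q; have h5 := finSize_two (q+1); omega⟩ ⟨(j:ℕ) - 2, by
          have h4 := finSize_two q; have h5 := finSize_two (q+1); omega⟩ =
        (if (i:ℕ) % 2 = 0 ∧ (j:ℕ) = (i:ℕ) + 1 then 1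
          else if (j:ℕ) % 2 = 0 ∧ (i:ℕ) = (j:ℕ) + 1 then ν ((j:ℕ) / 2) else 0)
      rw [ih (fun n => ν (n + 1))]
      simp only [Fin.val_mk]
      split_ifs <;> first | rfl | omega | (congr 1; omega)

lemma sum_fin_ite {m : ℕ} (n : ℕ) (f : Fin m → ℂ) :
    (∑ c : Fin m, if (c : ℕ) = n then f c else 0) =
      if h : n < m then f ⟨n, h⟩ else 0 := by
  split_ifs with h
  · rw [Finset.sum_eq_single (⟨n, h⟩ : Fin m)]
    · simp
    · intro b _ hb
      rw [if_neg]
      intro hc; exact hb (Fin.ext hc)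
    · simp
  · apply Finset.sum_eq_zero; intro c _
    have := c.isLt
    split_ifs with hc
    · omega
    · rfl

/-- the perturbed Jordan-type matrix: diagonal `lam 0, …, lam (k-1)`, superdiagonal 1. -/
def Cmat (k : ℕ) (lam : ℕ → ℂ) : Matrix (Fin k) (Fin k) ℂ :=
  Matrix.of fun i j =>
    if (j : ℕ) = (i : ℕ) then lam i else if (j : ℕ) = (i : ℕ) + 1 then 1 else 0

/-- explicit eigenvector matrix for `Cmat`. -/
def Tmat (k : ℕ) (lam : ℕ → ℂ) : Matrix (Fin k) (Fin k) ℂ :=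
  Matrix.of fun i j =>
    if (i : ℕ) ≤ (j : ℕ) then ∏ m ∈ Finset.Ico (i : ℕ) (j : ℕ), (lam j - lam m)⁻¹ else 0

lemma Tmat_det (k : ℕ) (lam : ℕ → ℂ) : (Tmat k lam).det = 1 := by
  have hbt : (Tmat k lam).BlockTriangular id := by
    intro i j hij
    simp only [id] at hij
    simp only [Tmat, Matrix.of_apply]
    rw [if_neg]
    exact not_le.mpr (by exact_mod_cast hij)
  rw [Matrix.det_of_upperTriangular hbt]
  apply Finset.prod_eq_one
  intro i _
  simp [Tmat, Finset.Ico_self]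

lemma CT_eq_TD (k : ℕ) (lam : ℕ → ℂ)
    (hd : ∀ i j, i < k → j < k → i ≠ j → lam i ≠ lam j) :
    Cmat k lam * Tmat k lam = Tmat k lam * Matrix.diagonal (fun i : Fin k => lam i) := by
  ext i j
  rw [Matrix.mul_apply, Matrix.mul_diagonal]
  have hsplit : ∀ c : Fin k, Cmat k lam i c * Tmat k lam c j =
      (if (c : ℕ) = (i : ℕ) then lam (i : ℕ) * Tmat k lam c j else 0)
      + (if (c : ℕ) = (i : ℕ) + 1 then Tmat k lam c j else 0) := by
    intro c
    simp only [Cmat, Matrix.of_apply]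
    split_ifs with p q <;> first | omega | ring
  rw [Finset.sum_congr rfl (fun c _ => hsplit c), Finset.sum_add_distrib,
    sum_fin_ite, sum_fin_ite, dif_pos i.isLt]
  have heta : (⟨(i : ℕ), i.isLt⟩ : Fin k) = i := rfl
  rw [heta]
  rcases lt_trichotomy (i : ℕ) (j : ℕ) with hij | hij | hij
  · -- i < j
    have hlt : (i : ℕ) + 1 < k := by have := j.isLt; omega
    rw [dif_pos hlt]
    have hTij : Tmat k lam i j =
        (lam (j : ℕ) - lam (i : ℕ))⁻¹ * ∏ m ∈ Finset.Ico ((i : ℕ) + 1) (j : ℕ), (lam j - lam m)⁻¹ := by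
      simp only [Tmat, Matrix.of_apply, if_pos (le_of_lt hij)]
      exact Finset.prod_eq_prod_Ico_succ_bot hij _
    have hTi1 : Tmat k lam ⟨(i : ℕ) + 1, hlt⟩ j =
        ∏ m ∈ Finset.Ico ((i : ℕ) + 1) (j : ℕ), (lam j - lam m)⁻¹ := by
      simp only [Tmat, Matrix.of_apply, Fin.val_mk]
      rw [if_pos (by omega : (i:ℕ)+1 ≤ (j : ℕ))]
    have hne : lam (j : ℕ) - lam (i : ℕ) ≠ 0 :=
      sub_ne_zero.mpr (hd (j : ℕ) (i : ℕ) j.isLt i.isLt (by omega))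
    rw [hTij, hTi1]
    have h1 : (lam (j:ℕ) - lam (i:ℕ))⁻¹ * (lam (j:ℕ) - lam (i:ℕ)) = 1 := inv_mul_cancel₀ hne
    linear_combination (-(∏ m ∈ Finset.Ico ((i:ℕ)+1) (j:ℕ), (lam (j:ℕ) - lam m)⁻¹)) * h1
  · -- i = j
    have hT1 : Tmat k lam i j = 1 := by
      simp only [Tmat, Matrix.of_apply, if_pos (le_of_eq hij)]
      rw [hij, Finset.Ico_self, Finset.prod_empty]
    have h2 : (if h : (i : ℕ) + 1 < k then Tmat k lam ⟨(i : ℕ) + 1, h⟩ j else 0) = 0 := by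
      split_ifs with h
      · simp only [Tmat, Matrix.of_apply, Fin.val_mk]; rw [if_neg]; omega
      · rfl
    rw [h2, hT1, hij]
    ring
  · -- i > j
    have hT0 : Tmat k lam i j = 0 := by
      simp only [Tmat, Matrix.of_apply]; rw [if_neg]; omega
    have h2 : (if h : (i : ℕ) + 1 < k then Tmat k lam ⟨(i : ℕ) + 1, h⟩ j else 0) = 0 := by
      split_ifs with h
      · simp only [Tmat, Matrix.of_apply, Fin.val_mk]; rw [if_neg]; omega
      · rfl
    rw [h2, hT0]
    ring

open scoped Classical in
/-- the "good" predicate: already a Type II-(a) parameter shape. -/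
def goodC (z : ℂ) : Prop := 1 < ‖z‖ ∨ (‖z‖ = 1 ∧ 0 < z.im)

open scoped Classical in
def nuF (lam : ℕ → ℂ) (n : ℕ) : ℂ := if goodC (lam n) then lam n else (lam n)⁻¹

open scoped Classical in
def sigmaF (k : ℕ) (lam : ℕ → ℂ) (r : ℕ) : ℕ :=
  if r < k then 2 * r + (if goodC (lam r) then 0 else 1)
  else 2 * (r - k) + (if goodC (lam (r - k)) then 1 else 0)

open scoped Classical in
def wF (k : ℕ) (lam : ℕ → ℂ) (r : ℕ) : ℂ :=
  if r < k then 1 else (if goodC (lam (r - k)) then 1 else lam (r - k))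

open scoped Classical in
def P23 (k : ℕ) (lam : ℕ → ℂ) : Matrix (Fin (k + k)) (Fin (k + k)) ℂ :=
  Matrix.of fun r c => if (c : ℕ) = sigmaF k lam r then wF k lam r else 0

open scoped Classical in
/-- entrywise form of the interleaved direct sum of `H2` blocks. -/
def Mnu (k : ℕ) (ν : ℕ → ℂ) : Matrix (Fin (k + k)) (Fin (k + k)) ℂ :=
  Matrix.of fun i j =>
    if (i : ℕ) % 2 = 0 ∧ (j : ℕ) = (i : ℕ) + 1 then 1
    else if (j : ℕ) % 2 = 0 ∧ (i : ℕ) = (j : ℕ) + 1 then ν ((j : ℕ) / 2) else 0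

open scoped Classical in
/-- entrywise form of `[[0, I], [D, 0]]` with `D = diag(lam)`. -/
def NN (k : ℕ) (lam : ℕ → ℂ) : Matrix (Fin (k + k)) (Fin (k + k)) ℂ :=
  Matrix.of fun r s =>
    if (r : ℕ) < k ∧ (s : ℕ) = (r : ℕ) + k then 1
    else if (s : ℕ) < k ∧ (r : ℕ) = (s : ℕ) + k then lam (s : ℕ) else 0

lemma sigmaF_lt (k : ℕ) (lam : ℕ → ℂ) (r : Fin (k + k)) :
    sigmaF k lam (r : ℕ) < k + k := by
  have := r.isLt
  unfold sigmaF
  split_ifs <;> omega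

lemma sigmaF_inj (k : ℕ) (lam : ℕ → ℂ) (r r' : Fin (k + k))
    (h : sigmaF k lam (r : ℕ) = sigmaF k lam (r' : ℕ)) : r = r' := by
  classical
  have hr := r.isLt
  have hr' := r'.isLt
  apply Fin.ext
  unfold sigmaF at h
  by_cases h1 : (r : ℕ) < k <;> by_cases h2 : (r' : ℕ) < k
  · rw [if_pos h1, if_pos h2] at h
    split_ifs at h <;> omega
  · rw [if_pos h1, if_neg h2] at h
    by_cases g1 : goodC (lam (r : ℕ)) <;> by_cases g2 : goodC (lam ((r' : ℕ) - k))
    · rw [if_pos g1, if_pos g2] at h; omega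
    · rw [if_pos g1, if_neg g2] at h
      have he : (r : ℕ) = (r' : ℕ) - k := by omega
      rw [he] at g1; exact absurd g1 g2
    · rw [if_neg g1, if_pos g2] at h
      have he : (r : ℕ) = (r' : ℕ) - k := by omega
      rw [he] at g1; exact absurd g2 g1
    · rw [if_neg g1, if_neg g2] at h; omega
  · rw [if_neg h1, if_pos h2] at h
    by_cases g1 : goodC (lam ((r : ℕ) - k)) <;> by_cases g2 : goodC (lam (r' : ℕ))
    · rw [if_pos g1, if_pos g2] at h; omega
    · rw [if_pos g1, if_neg g2] at h
      have he : (r' : ℕ) = (r : ℕ) - k := by omega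
      rw [he] at g2; exact absurd g1 g2
    · rw [if_neg g1, if_pos g2] at h
      have he : (r' : ℕ) = (r : ℕ) - k := by omega
      rw [he] at g2; exact absurd g2 g1
    · rw [if_neg g1, if_neg g2] at h; omega
  · rw [if_neg h1, if_neg h2] at h
    by_cases g1 : goodC (lam ((r : ℕ) - k)) <;> by_cases g2 : goodC (lam ((r' : ℕ) - k))
    · rw [if_pos g1, if_pos g2] at h
      have he : (r : ℕ) - k = (r' : ℕ) - k := by omega
      omega
    · rw [if_pos g1, if_neg g2] at h
      have he : (r : ℕ) - k = (r' : ℕ) - k := by omega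
      rw [he] at g1; exact absurd g1 g2
    · rw [if_neg g1, if_pos g2] at h
      have he : (r : ℕ) - k = (r' : ℕ) - k := by omega
      rw [he] at g1; exact absurd g2 g1
    · rw [if_neg g1, if_neg g2] at h; omega

lemma wF_ne_zero (k : ℕ) (lam : ℕ → ℂ) (hlam0 : ∀ a, a < k → lam a ≠ 0)
    (r : Fin (k + k)) : wF k lam (r : ℕ) ≠ 0 := by
  classical
  have hr := r.isLt
  unfold wF
  split_ifs with h1 h2
  · exact one_ne_zero
  · exact one_ne_zero
  · exact hlam0 _ (by omega)

lemma PMP_apply (k : ℕ) (lam ν : ℕ → ℂ) (r s : Fin (k + k)) :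
    (P23 k lam * Mnu k ν * (P23 k lam)ᵀ) r s =
      wF k lam (r : ℕ) *
        Mnu k ν ⟨sigmaF k lam (r : ℕ), sigmaF_lt k lam r⟩
          ⟨sigmaF k lam (s : ℕ), sigmaF_lt k lam s⟩ * wF k lam (s : ℕ) := by
  classical
  have hPM : ∀ d : Fin (k + k), (P23 k lam * Mnu k ν) r d =
      wF k lam (r : ℕ) * Mnu k ν ⟨sigmaF k lam (r : ℕ), sigmaF_lt k lam r⟩ d := by
    intro d
    rw [Matrix.mul_apply]
    have : ∀ c : Fin (k + k), P23 k lam r c * Mnu k ν c d =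
        (if (c : ℕ) = sigmaF k lam (r : ℕ) then wF k lam (r : ℕ) * Mnu k ν c d else 0) := by
      intro c
      simp only [P23, Matrix.of_apply, ite_mul, zero_mul]
    rw [Finset.sum_congr rfl (fun c _ => this c), sum_fin_ite,
      dif_pos (sigmaF_lt k lam r)]
  rw [Matrix.mul_apply]
  have : ∀ d : Fin (k + k), (P23 k lam * Mnu k ν) r d * (P23 k lam)ᵀ d s =
      (if (d : ℕ) = sigmaF k lam (s : ℕ) then
        (wF k lam (r : ℕ) * Mnu k ν ⟨sigmaF k lam (r : ℕ), sigmaF_lt k lam r⟩ d)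
          * wF k lam (s : ℕ) else 0) := by
    intro d
    rw [hPM d, Matrix.transpose_apply]
    simp only [P23, Matrix.of_apply, mul_ite, mul_zero]
  rw [Finset.sum_congr rfl (fun d _ => this d), sum_fin_ite,
    dif_pos (sigmaF_lt k lam s)]

open scoped Classical in
lemma sigma_succ_contra (lam : ℕ → ℂ) (r s : ℕ)
    (p1 : (2 * r + (if goodC (lam r) then 0 else 1)) % 2 = 0)
    (p2 : 2 * s + (if goodC (lam s) then 0 else 1)
        = 2 * r + (if goodC (lam r) then 0 else 1) + 1) : False := by
  classical
  by_cases g1 : goodC (lam r)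
  · rw [if_pos g1] at p1 p2
    by_cases g2 : goodC (lam s)
    · rw [if_pos g2] at p2; omega
    · rw [if_neg g2] at p2
      have he : s = r := by omega
      rw [he] at g2; exact g2 g1
  · rw [if_neg g1] at p1; omega

open scoped Classical in
lemma sigma_succ_contra' (lam : ℕ → ℂ) (a a' : ℕ)
    (p1 : (2 * a + (if goodC (lam a) then 1 else 0)) % 2 = 0)
    (p2 : 2 * a' + (if goodC (lam a') then 1 else 0)
        = 2 * a + (if goodC (lam a) then 1 else 0) + 1) : False := by
  classical
  by_cases g1 : goodC (lam a)
  · rw [if_pos g1] at p1; omega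
  · rw [if_neg g1] at p1 p2
    by_cases g2 : goodC (lam a')
    · rw [if_pos g2] at p2
      have he : a' = a := by omega
      rw [he] at g2; exact g1 g2
    · rw [if_neg g2] at p2; omega

lemma P23_congr (k : ℕ) (lam : ℕ → ℂ) (hlam0 : ∀ a, a < k → lam a ≠ 0) :
    P23 k lam * Mnu k (nuF lam) * (P23 k lam)ᵀ = NN k lam := by
  classical
  ext r s
  rw [PMP_apply]
  have hr := r.isLt
  have hs := s.isLt
  simp only [Mnu, NN, Matrix.of_apply, Fin.val_mk]
  by_cases h1 : (r : ℕ) < k <;> by_cases h2 : (s : ℕ) < k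
  · -- both in the first half : result 0
    rw [if_neg (show ¬((r:ℕ) < k ∧ (s:ℕ) = (r:ℕ) + k) by omega),
        if_neg (show ¬((s:ℕ) < k ∧ (r:ℕ) = (s:ℕ) + k) by omega)]
    have ewr : wF k lam (r:ℕ) = 1 := if_pos h1
    have ews : wF k lam (s:ℕ) = 1 := if_pos h2
    rw [ewr, ews]
    by_cases g1 : goodC (lam (r:ℕ)) <;> by_cases g2 : goodC (lam (s:ℕ))
    · have eσr : sigmaF k lam (r:ℕ) = 2*(r:ℕ) := by unfold sigmaF; rw [if_pos h1, if_pos g1] <;> omega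
      have eσs : sigmaF k lam (s:ℕ) = 2*(s:ℕ) := by unfold sigmaF; rw [if_pos h2, if_pos g2] <;> omega
      rw [eσr, eσs,
        if_neg (show ¬((2*(r:ℕ))%2 = 0 ∧ 2*(s:ℕ) = 2*(r:ℕ)+1) by omega),
        if_neg (show ¬((2*(s:ℕ))%2 = 0 ∧ 2*(r:ℕ) = 2*(s:ℕ)+1) by omega)]
      ring
    · have eσr : sigmaF k lam (r:ℕ) = 2*(r:ℕ) := by unfold sigmaF; rw [if_pos h1, if_pos g1] <;> omega
      have eσs : sigmaF k lam (s:ℕ) = 2*(s:ℕ)+1 := by unfold sigmaF; rw [if_pos h2, if_neg g2] <;> omega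
      rw [eσr, eσs,
        if_neg (show ¬((2*(r:ℕ))%2 = 0 ∧ 2*(s:ℕ)+1 = 2*(r:ℕ)+1) from fun ⟨p1, p2⟩ => by
          have he : (s:ℕ) = (r:ℕ) := by omega
          rw [he] at g2; exact g2 g1),
        if_neg (show ¬((2*(s:ℕ)+1)%2 = 0 ∧ 2*(r:ℕ) = 2*(s:ℕ)+1+1) by omega)]
      ring
    · have eσr : sigmaF k lam (r:ℕ) = 2*(r:ℕ)+1 := by unfold sigmaF; rw [if_pos h1, if_neg g1] <;> omega
      have eσs : sigmaF k lam (s:ℕ) = 2*(s:ℕ) := by unfold sigmaF; rw [if_pos h2, if_pos g2] <;> omega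
      rw [eσr, eσs,
        if_neg (show ¬((2*(r:ℕ)+1)%2 = 0 ∧ 2*(s:ℕ) = 2*(r:ℕ)+1+1) by omega),
        if_neg (show ¬((2*(s:ℕ))%2 = 0 ∧ 2*(r:ℕ)+1 = 2*(s:ℕ)+1) from fun ⟨p1, p2⟩ => by
          have he : (s:ℕ) = (r:ℕ) := by omega
          rw [he] at g2; exact g1 g2)]
      ring
    · have eσr : sigmaF k lam (r:ℕ) = 2*(r:ℕ)+1 := by unfold sigmaF; rw [if_pos h1, if_neg g1] <;> omega
      have eσs : sigmaF k lam (s:ℕ) = 2*(s:ℕ)+1 := by unfold sigmaF; rw [if_pos h2, if_neg g2] <;> omega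
      rw [eσr, eσs,
        if_neg (show ¬((2*(r:ℕ)+1)%2 = 0 ∧ 2*(s:ℕ)+1 = 2*(r:ℕ)+1+1) by omega),
        if_neg (show ¬((2*(s:ℕ)+1)%2 = 0 ∧ 2*(r:ℕ)+1 = 2*(s:ℕ)+1+1) by omega)]
      ring
  · -- r < k ≤ s
    rw [if_neg (show ¬((s:ℕ) < k ∧ (r:ℕ) = (s:ℕ) + k) by omega)]
    have ewr : wF k lam (r:ℕ) = 1 := if_pos h1
    rw [ewr, one_mul]
    by_cases heq : (s:ℕ) = (r:ℕ) + k
    · rw [if_pos (show (r:ℕ) < k ∧ (s:ℕ) = (r:ℕ) + k from ⟨h1, heq⟩)]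
      have hsk : (s:ℕ) - k = (r:ℕ) := by omega
      by_cases g : goodC (lam (r:ℕ))
      · have eσr : sigmaF k lam (r:ℕ) = 2*(r:ℕ) := by unfold sigmaF; rw [if_pos h1, if_pos g] <;> omega
        have eσs : sigmaF k lam (s:ℕ) = 2*(r:ℕ)+1 := by
          unfold sigmaF; rw [if_neg h2, hsk, if_pos g] <;> omega
        have ews : wF k lam (s:ℕ) = 1 := by unfold wF; rw [if_neg h2, hsk, if_pos g] <;> omega
        rw [eσr, eσs, ews,
          if_pos (show (2*(r:ℕ))%2 = 0 ∧ 2*(r:ℕ)+1 = 2*(r:ℕ)+1 from ⟨by omega, rfl⟩)]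
        norm_num
      · have eσr : sigmaF k lam (r:ℕ) = 2*(r:ℕ)+1 := by unfold sigmaF; rw [if_pos h1, if_neg g] <;> omega
        have eσs : sigmaF k lam (s:ℕ) = 2*(r:ℕ) := by
          unfold sigmaF; rw [if_neg h2, hsk, if_neg g] <;> omega
        have ews : wF k lam (s:ℕ) = lam (r:ℕ) := by unfold wF; rw [if_neg h2, hsk, if_neg g] <;> omega
        rw [eσr, eσs, ews,
          if_neg (show ¬((2*(r:ℕ)+1)%2 = 0 ∧ 2*(r:ℕ) = 2*(r:ℕ)+1+1) by omega),
          if_pos (show (2*(r:ℕ))%2 = 0 ∧ 2*(r:ℕ)+1 = 2*(r:ℕ)+1 from ⟨by omega, rfl⟩)]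
        have hdiv : 2*(r:ℕ)/2 = (r:ℕ) := by omega
        rw [hdiv]
        have env : nuF lam (r:ℕ) = (lam (r:ℕ))⁻¹ := if_neg g
        rw [env, inv_mul_cancel₀ (hlam0 _ h1)]
    · rw [if_neg (show ¬((r:ℕ) < k ∧ (s:ℕ) = (r:ℕ) + k) by omega)]
      by_cases g1 : goodC (lam (r:ℕ)) <;> by_cases g2 : goodC (lam ((s:ℕ)-k))
      · have eσr : sigmaF k lam (r:ℕ) = 2*(r:ℕ) := by unfold sigmaF; rw [if_pos h1, if_pos g1] <;> omega
        have eσs : sigmaF k lam (s:ℕ) = 2*((s:ℕ)-k)+1 := by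
          unfold sigmaF; rw [if_neg h2, if_pos g2] <;> omega
        rw [eσr, eσs,
          if_neg (show ¬((2*(r:ℕ))%2 = 0 ∧ 2*((s:ℕ)-k)+1 = 2*(r:ℕ)+1) by omega),
          if_neg (show ¬((2*((s:ℕ)-k)+1)%2 = 0 ∧ 2*(r:ℕ) = 2*((s:ℕ)-k)+1+1) by omega)]
        ring
      · have eσr : sigmaF k lam (r:ℕ) = 2*(r:ℕ) := by unfold sigmaF; rw [if_pos h1, if_pos g1] <;> omega
        have eσs : sigmaF k lam (s:ℕ) = 2*((s:ℕ)-k) := by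
          unfold sigmaF; rw [if_neg h2, if_neg g2] <;> omega
        rw [eσr, eσs,
          if_neg (show ¬((2*(r:ℕ))%2 = 0 ∧ 2*((s:ℕ)-k) = 2*(r:ℕ)+1) by omega),
          if_neg (show ¬((2*((s:ℕ)-k))%2 = 0 ∧ 2*(r:ℕ) = 2*((s:ℕ)-k)+1) by omega)]
        ring
      · have eσr : sigmaF k lam (r:ℕ) = 2*(r:ℕ)+1 := by unfold sigmaF; rw [if_pos h1, if_neg g1] <;> omega
        have eσs : sigmaF k lam (s:ℕ) = 2*((s:ℕ)-k)+1 := by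
          unfold sigmaF; rw [if_neg h2, if_pos g2] <;> omega
        rw [eσr, eσs,
          if_neg (show ¬((2*(r:ℕ)+1)%2 = 0 ∧ 2*((s:ℕ)-k)+1 = 2*(r:ℕ)+1+1) by omega),
          if_neg (show ¬((2*((s:ℕ)-k)+1)%2 = 0 ∧ 2*(r:ℕ)+1 = 2*((s:ℕ)-k)+1+1) by omega)]
        ring
      · have eσr : sigmaF k lam (r:ℕ) = 2*(r:ℕ)+1 := by unfold sigmaF; rw [if_pos h1, if_neg g1] <;> omega
        have eσs : sigmaF k lam (s:ℕ) = 2*((s:ℕ)-k) := by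
          unfold sigmaF; rw [if_neg h2, if_neg g2] <;> omega
        rw [eσr, eσs,
          if_neg (show ¬((2*(r:ℕ)+1)%2 = 0 ∧ 2*((s:ℕ)-k) = 2*(r:ℕ)+1+1) by omega),
          if_neg (show ¬((2*((s:ℕ)-k))%2 = 0 ∧ 2*(r:ℕ)+1 = 2*((s:ℕ)-k)+1) by omega)]
        ring
  · -- s < k ≤ r
    rw [if_neg (show ¬((r:ℕ) < k ∧ (s:ℕ) = (r:ℕ) + k) by omega)]
    have ews : wF k lam (s:ℕ) = 1 := if_pos h2
    rw [ews, mul_one]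
    by_cases heq : (r:ℕ) = (s:ℕ) + k
    · rw [if_pos (show (s:ℕ) < k ∧ (r:ℕ) = (s:ℕ) + k from ⟨h2, heq⟩)]
      have hrk : (r:ℕ) - k = (s:ℕ) := by omega
      by_cases g : goodC (lam (s:ℕ))
      · have eσs : sigmaF k lam (s:ℕ) = 2*(s:ℕ) := by unfold sigmaF; rw [if_pos h2, if_pos g] <;> omega
        have eσr : sigmaF k lam (r:ℕ) = 2*(s:ℕ)+1 := by
          unfold sigmaF; rw [if_neg h1, hrk, if_pos g] <;> omega
        have ewr : wF k lam (r:ℕ) = 1 := by unfold wF; rw [if_neg h1, hrk, if_pos g] <;> omega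
        rw [eσr, eσs, ewr,
          if_neg (show ¬((2*(s:ℕ)+1)%2 = 0 ∧ 2*(s:ℕ) = 2*(s:ℕ)+1+1) by omega),
          if_pos (show (2*(s:ℕ))%2 = 0 ∧ 2*(s:ℕ)+1 = 2*(s:ℕ)+1 from ⟨by omega, rfl⟩)]
        have hdiv : 2*(s:ℕ)/2 = (s:ℕ) := by omega
        rw [hdiv]
        have env : nuF lam (s:ℕ) = lam (s:ℕ) := if_pos g
        rw [env]
        ring
      · have eσs : sigmaF k lam (s:ℕ) = 2*(s:ℕ)+1 := by unfold sigmaF; rw [if_pos h2, if_neg g] <;> omega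
        have eσr : sigmaF k lam (r:ℕ) = 2*(s:ℕ) := by
          unfold sigmaF; rw [if_neg h1, hrk, if_neg g] <;> omega
        have ewr : wF k lam (r:ℕ) = lam (s:ℕ) := by unfold wF; rw [if_neg h1, hrk, if_neg g] <;> omega
        rw [eσr, eσs, ewr,
          if_pos (show (2*(s:ℕ))%2 = 0 ∧ 2*(s:ℕ)+1 = 2*(s:ℕ)+1 from ⟨by omega, rfl⟩)]
        ring
    · rw [if_neg (show ¬((s:ℕ) < k ∧ (r:ℕ) = (s:ℕ) + k) by omega)]
      by_cases g1 : goodC (lam ((r:ℕ)-k)) <;> by_cases g2 : goodC (lam (s:ℕ))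
      · have eσr : sigmaF k lam (r:ℕ) = 2*((r:ℕ)-k)+1 := by
          unfold sigmaF; rw [if_neg h1, if_pos g1] <;> omega
        have eσs : sigmaF k lam (s:ℕ) = 2*(s:ℕ) := by unfold sigmaF; rw [if_pos h2, if_pos g2] <;> omega
        rw [eσr, eσs,
          if_neg (show ¬((2*((r:ℕ)-k)+1)%2 = 0 ∧ 2*(s:ℕ) = 2*((r:ℕ)-k)+1+1) by omega),
          if_neg (show ¬((2*(s:ℕ))%2 = 0 ∧ 2*((r:ℕ)-k)+1 = 2*(s:ℕ)+1) by omega)]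
        ring
      · have eσr : sigmaF k lam (r:ℕ) = 2*((r:ℕ)-k)+1 := by
          unfold sigmaF; rw [if_neg h1, if_pos g1] <;> omega
        have eσs : sigmaF k lam (s:ℕ) = 2*(s:ℕ)+1 := by unfold sigmaF; rw [if_pos h2, if_neg g2] <;> omega
        rw [eσr, eσs,
          if_neg (show ¬((2*((r:ℕ)-k)+1)%2 = 0 ∧ 2*(s:ℕ)+1 = 2*((r:ℕ)-k)+1+1) by omega),
          if_neg (show ¬((2*(s:ℕ)+1)%2 = 0 ∧ 2*((r:ℕ)-k)+1 = 2*(s:ℕ)+1+1) by omega)]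
        ring
      · have eσr : sigmaF k lam (r:ℕ) = 2*((r:ℕ)-k) := by
          unfold sigmaF; rw [if_neg h1, if_neg g1] <;> omega
        have eσs : sigmaF k lam (s:ℕ) = 2*(s:ℕ) := by unfold sigmaF; rw [if_pos h2, if_pos g2] <;> omega
        rw [eσr, eσs,
          if_neg (show ¬((2*((r:ℕ)-k))%2 = 0 ∧ 2*(s:ℕ) = 2*((r:ℕ)-k)+1) by omega),
          if_neg (show ¬((2*(s:ℕ))%2 = 0 ∧ 2*((r:ℕ)-k) = 2*(s:ℕ)+1) by omega)]
        ring
      · have eσr : sigmaF k lam (r:ℕ) = 2*((r:ℕ)-k) := by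
          unfold sigmaF; rw [if_neg h1, if_neg g1] <;> omega
        have eσs : sigmaF k lam (s:ℕ) = 2*(s:ℕ)+1 := by unfold sigmaF; rw [if_pos h2, if_neg g2] <;> omega
        rw [eσr, eσs,
          if_neg (show ¬((2*((r:ℕ)-k))%2 = 0 ∧ 2*(s:ℕ)+1 = 2*((r:ℕ)-k)+1) by omega),
          if_neg (show ¬((2*(s:ℕ)+1)%2 = 0 ∧ 2*((r:ℕ)-k) = 2*(s:ℕ)+1+1) by omega)]
        ring
  · -- both in second half : 0
    rw [if_neg (show ¬((r:ℕ) < k ∧ (s:ℕ) = (r:ℕ) + k) by omega),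
        if_neg (show ¬((s:ℕ) < k ∧ (r:ℕ) = (s:ℕ) + k) by omega)]
    by_cases g1 : goodC (lam ((r:ℕ)-k)) <;> by_cases g2 : goodC (lam ((s:ℕ)-k))
    · have eσr : sigmaF k lam (r:ℕ) = 2*((r:ℕ)-k)+1 := by
        unfold sigmaF; rw [if_neg h1, if_pos g1] <;> omega
      have eσs : sigmaF k lam (s:ℕ) = 2*((s:ℕ)-k)+1 := by
        unfold sigmaF; rw [if_neg h2, if_pos g2] <;> omega
      rw [eσr, eσs,
        if_neg (show ¬((2*((r:ℕ)-k)+1)%2 = 0 ∧ 2*((s:ℕ)-k)+1 = 2*((r:ℕ)-k)+1+1) by omega),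
        if_neg (show ¬((2*((s:ℕ)-k)+1)%2 = 0 ∧ 2*((r:ℕ)-k)+1 = 2*((s:ℕ)-k)+1+1) by omega)]
      ring
    · have eσr : sigmaF k lam (r:ℕ) = 2*((r:ℕ)-k)+1 := by
        unfold sigmaF; rw [if_neg h1, if_pos g1] <;> omega
      have eσs : sigmaF k lam (s:ℕ) = 2*((s:ℕ)-k) := by
        unfold sigmaF; rw [if_neg h2, if_neg g2] <;> omega
      rw [eσr, eσs,
        if_neg (show ¬((2*((r:ℕ)-k)+1)%2 = 0 ∧ 2*((s:ℕ)-k) = 2*((r:ℕ)-k)+1+1) by omega),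
        if_neg (show ¬((2*((s:ℕ)-k))%2 = 0 ∧ 2*((r:ℕ)-k)+1 = 2*((s:ℕ)-k)+1) from
          fun ⟨p1, p2⟩ => by
            have he : (r:ℕ) - k = (s:ℕ) - k := by omega
            rw [he] at g1; exact g2 g1)]
      ring
    · have eσr : sigmaF k lam (r:ℕ) = 2*((r:ℕ)-k) := by
        unfold sigmaF; rw [if_neg h1, if_neg g1] <;> omega
      have eσs : sigmaF k lam (s:ℕ) = 2*((s:ℕ)-k)+1 := by
        unfold sigmaF; rw [if_neg h2, if_pos g2] <;> omega
      rw [eσr, eσs,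
        if_neg (show ¬((2*((r:ℕ)-k))%2 = 0 ∧ 2*((s:ℕ)-k)+1 = 2*((r:ℕ)-k)+1) from
          fun ⟨p1, p2⟩ => by
            have he : (s:ℕ) - k = (r:ℕ) - k := by omega
            rw [he] at g2; exact g1 g2),
        if_neg (show ¬((2*((s:ℕ)-k)+1)%2 = 0 ∧ 2*((r:ℕ)-k) = 2*((s:ℕ)-k)+1+1) by omega)]
      ring
    · have eσr : sigmaF k lam (r:ℕ) = 2*((r:ℕ)-k) := by
        unfold sigmaF; rw [if_neg h1, if_neg g1] <;> omega
      have eσs : sigmaF k lam (s:ℕ) = 2*((s:ℕ)-k) := by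
        unfold sigmaF; rw [if_neg h2, if_neg g2] <;> omega
      rw [eσr, eσs,
        if_neg (show ¬((2*((r:ℕ)-k))%2 = 0 ∧ 2*((s:ℕ)-k) = 2*((r:ℕ)-k)+1) by omega),
        if_neg (show ¬((2*((s:ℕ)-k))%2 = 0 ∧ 2*((r:ℕ)-k) = 2*((s:ℕ)-k)+1) by omega)]
      ring

open scoped Classical in
lemma P23_isUnit (k : ℕ) (lam : ℕ → ℂ) (hlam0 : ∀ a, a < k → lam a ≠ 0) :
    IsUnit (P23 k lam) := by
  classical
  set Q : Matrix (Fin (k + k)) (Fin (k + k)) ℂ :=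
    Matrix.of fun c r => if (c : ℕ) = sigmaF k lam (r : ℕ) then (wF k lam (r : ℕ))⁻¹ else 0
    with hQ
  have hmul : P23 k lam * Q = 1 := by
    ext r r'
    rw [Matrix.mul_apply]
    have : ∀ c : Fin (k + k), P23 k lam r c * Q c r' =
        (if (c : ℕ) = sigmaF k lam (r : ℕ) then wF k lam (r : ℕ) * Q c r' else 0) := by
      intro c
      simp only [P23, Matrix.of_apply, ite_mul, zero_mul]
    rw [Finset.sum_congr rfl (fun c _ => this c), sum_fin_ite, dif_pos (sigmaF_lt k lam r)]
    simp only [hQ, Matrix.of_apply, Fin.val_mk]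
    by_cases he : r = r'
    · rw [he, if_pos rfl, mul_inv_cancel₀ (wF_ne_zero k lam hlam0 r'), Matrix.one_apply_eq]
    · rw [if_neg (fun hc => he (sigmaF_inj k lam r r' hc)), mul_zero,
        Matrix.one_apply_ne he]
  exact (Matrix.isUnit_iff_isUnit_det _).mpr (Matrix.isUnit_det_of_right_inverse hmul)

open scoped Classical in
lemma NN_eq (k : ℕ) (lam : ℕ → ℂ) :
    NN k lam = Matrix.reindex finSumFinEquiv finSumFinEquiv
      (Matrix.fromBlocks 0 (1 : Matrix (Fin k) (Fin k) ℂ)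
        (Matrix.diagonal fun i : Fin k => lam (i : ℕ)) 0) := by
  ext r s
  rw [reindex_fromBlocks_apply]
  have hr := r.isLt
  have hs := s.isLt
  simp only [NN, Matrix.of_apply]
  by_cases h1 : (r : ℕ) < k <;> by_cases h2 : (s : ℕ) < k
  · rw [dif_pos h1, dif_pos h2,
      if_neg (show ¬((r:ℕ) < k ∧ (s:ℕ) = (r:ℕ) + k) by omega),
      if_neg (show ¬((s:ℕ) < k ∧ (r:ℕ) = (s:ℕ) + k) by omega)]
    rfl
  · rw [dif_pos h1, dif_neg h2, Matrix.one_apply]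
    by_cases he : (s : ℕ) = (r : ℕ) + k
    · rw [if_pos ⟨h1, he⟩, if_pos (by apply Fin.ext; simp only [Fin.val_mk]; omega)]
    · rw [if_neg (fun h => he h.2),
        if_neg (show ¬((s:ℕ) < k ∧ (r:ℕ) = (s:ℕ) + k) by omega),
        if_neg (fun h => by
          have := congrArg Fin.val h
          simp only [Fin.val_mk] at this
          omega)]
  · rw [dif_neg h1, dif_pos h2, Matrix.diagonal_apply]
    by_cases he : (r : ℕ) = (s : ℕ) + k
    · rw [if_neg (show ¬((r:ℕ) < k ∧ (s:ℕ) = (r:ℕ) + k) by omega),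
        if_pos ⟨h2, he⟩, if_pos (by apply Fin.ext; simp only [Fin.val_mk]; omega)]
      simp only [Fin.val_mk]
      congr 1
      omega
    · rw [if_neg (show ¬((r:ℕ) < k ∧ (s:ℕ) = (r:ℕ) + k) by omega),
        if_neg (fun h => he h.2),
        if_neg (fun h => by
          have := congrArg Fin.val h
          simp only [Fin.val_mk] at this
          omega)]
  · rw [dif_neg h1, dif_neg h2,
      if_neg (show ¬((r:ℕ) < k ∧ (s:ℕ) = (r:ℕ) + k) by omega),
      if_neg (show ¬((s:ℕ) < k ∧ (r:ℕ) = (s:ℕ) + k) by omega)]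
    rfl

lemma Mnu_eq_pairH (k : ℕ) (ν : ℕ → ℂ) (h : finSize (fun _ : Fin k => 2) = k + k) :
    Matrix.reindex (finCongr h) (finCongr h) (pairH k (fun i => ν (i : ℕ))) = Mnu k ν := by
  ext i j
  rw [Matrix.reindex_apply, Matrix.submatrix_apply, pairH_apply]
  simp only [Mnu, Matrix.of_apply, finCongr_symm, finCongr_apply, Fin.coe_cast]

lemma main_congruence (k : ℕ) (lam : ℕ → ℂ)
    (hd : ∀ i j, i < k → j < k → i ≠ j → lam i ≠ lam j)
    (hlam0 : ∀ a, a < k → lam a ≠ 0) :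
    ∃ P : Matrix (Fin (k + k)) (Fin (k + k)) ℂ, IsUnit P ∧
      Matrix.reindex finSumFinEquiv finSumFinEquiv
          (Matrix.fromBlocks 0 1 (Cmat k lam) 0) =
        P * Mnu k (nuF lam) * Pᵀ := by
  classical
  set T := Tmat k lam with hT
  have hdetT : T.det = 1 := Tmat_det k lam
  have hTu : IsUnit T.det := by rw [hdetT]; exact isUnit_one
  have hTtu : IsUnit Tᵀ.det := by rw [Matrix.det_transpose, hdetT]; exact isUnit_one
  set D := Matrix.diagonal (fun i : Fin k => lam (i : ℕ)) with hD
  have hC : T * D * T⁻¹ = Cmat k lam := by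
    rw [← CT_eq_TD k lam hd]
    exact Matrix.mul_nonsing_inv_cancel_right _ _ hTu
  set P1 : Matrix (Fin (k + k)) (Fin (k + k)) ℂ :=
    Matrix.reindex finSumFinEquiv finSumFinEquiv
      (Matrix.fromBlocks (Tᵀ)⁻¹ 0 0 T) with hP1
  have hP1u : IsUnit P1 := by
    rw [Matrix.isUnit_iff_isUnit_det, hP1, Matrix.det_reindex_self,
      Matrix.det_fromBlocks_zero₂₁, Matrix.det_nonsing_inv, Matrix.det_transpose, hdetT]
    simp
  have claim1 : P1 * NN k lam * P1ᵀ =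
      Matrix.reindex finSumFinEquiv finSumFinEquiv
        (Matrix.fromBlocks 0 1 (Cmat k lam) 0) := by
    rw [NN_eq, hP1]
    have ht : (Matrix.reindex finSumFinEquiv finSumFinEquiv
        (Matrix.fromBlocks (Tᵀ)⁻¹ 0 0 T))ᵀ =
        Matrix.reindex finSumFinEquiv finSumFinEquiv
          (Matrix.fromBlocks ((Tᵀ)⁻¹)ᵀ 0 0 Tᵀ) := by
      rw [Matrix.reindex_apply, Matrix.reindex_apply, Matrix.transpose_submatrix,
        Matrix.fromBlocks_transpose]
      simp
    rw [ht]
    rw [Matrix.reindex_apply, Matrix.reindex_apply, Matrix.reindex_apply,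
      Matrix.reindex_apply, Matrix.submatrix_mul_equiv, Matrix.submatrix_mul_equiv]
    congr 1
    rw [Matrix.fromBlocks_multiply, Matrix.fromBlocks_multiply]
    have e1 : ((Tᵀ)⁻¹)ᵀ = T⁻¹ := by
      rw [← Matrix.transpose_nonsing_inv, Matrix.transpose_transpose]
    have e2 : (Tᵀ)⁻¹ * Tᵀ = 1 := Matrix.nonsing_inv_mul _ hTtu
    have hC' : T * (D * T⁻¹) = Cmat k lam := by rw [← Matrix.mul_assoc]; exact hC
    simp only [Matrix.mul_zero, Matrix.zero_mul, Matrix.mul_one, Matrix.one_mul,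
      add_zero, zero_add, e1, Matrix.mul_assoc, e2, hC']
    rw [← hD, hC']
  refine ⟨P1 * P23 k lam, hP1u.mul (P23_isUnit k lam hlam0), ?_⟩
  rw [Matrix.transpose_mul, ← claim1, ← P23_congr k lam hlam0]
  simp only [Matrix.mul_assoc]


lemma goodC_typeIIa {z : ℂ} (h : goodC z) : TypeIIaParam z := by
  rcases h with h | ⟨h1, h2⟩
  · exact Or.inl h
  · right
    refine ⟨Complex.arg z, ?_, ?_, ?_⟩
    · rcases lt_or_eq_of_le (Complex.arg_nonneg_iff.mpr h2.le) with h3 | h3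
      · exact h3
      · exfalso
        have := Complex.arg_eq_zero_iff.mp h3.symm
        exact absurd this.2 (ne_of_gt h2)
    · exact Complex.arg_lt_pi_iff.mpr (Or.inr (ne_of_gt h2))
    · have := Complex.norm_mul_exp_arg_mul_I z
      rw [h1] at this
      simpa using this.symm

lemma goodC_inv {z : ℂ} (h0 : z ≠ 0) (h1 : z ≠ 1) (h2 : z ≠ -1) (hg : ¬goodC z) :
    goodC z⁻¹ := by
  have habs : ‖z‖ ≤ 1 := by
    by_contra h
    push_neg at h
    exact hg (Or.inl h)
  rcases lt_or_eq_of_le habs with hlt | heq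
  · left
    rw [norm_inv]
    have hpos : 0 < ‖z‖ := norm_pos_iff.mpr h0
    rw [lt_inv_comm₀ one_pos hpos]
    simpa using hlt
  · -- abs z = 1
    have him : z.im ≤ 0 := by
      by_contra h
      exact hg (Or.inr ⟨heq, lt_of_not_ge h⟩)
    rcases lt_or_eq_of_le him with hlt | heq2
    · right
      constructor
      · rw [norm_inv, heq]; norm_num
      · rw [Complex.inv_im]
        apply div_pos (by linarith)
        have : Complex.normSq z = 1 := by
          have := Complex.sq_norm z
          rw [heq] at this; simpa using this.symm
        rw [this]; norm_num
    · exfalso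
      have hre : z = (z.re : ℂ) := by
        apply Complex.ext <;> simp [heq2.symm]
      have : |z.re| = 1 := by
        have := congrArg (‖·‖) hre
        rw [heq, Complex.norm_real, Real.norm_eq_abs] at this
        exact this.symm
      rcases abs_eq (by norm_num : (0:ℝ) ≤ 1) |>.mp this with h | h
      · exact h1 (by rw [hre, h]; norm_num)
      · exact h2 (by rw [hre, h]; norm_num)

open scoped Classical in
lemma nuF_typeIIa (lam : ℕ → ℂ) (a : ℕ) (h0 : lam a ≠ 0) (h1 : lam a ≠ 1)
    (h2 : lam a ≠ -1) : TypeIIaParam (nuF lam a) := by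
  unfold nuF
  split_ifs with hg
  · exact goodC_typeIIa hg
  · exact goodC_typeIIa (goodC_inv h0 h1 h2 hg)

open scoped Classical in
lemma nuF_inj (lam : ℕ → ℂ) (a b : ℕ) (hne : lam a ≠ lam b) (h0a : lam a ≠ 0)
    (h0b : lam b ≠ 0) (hprod : lam a * lam b ≠ 1) : nuF lam a ≠ nuF lam b := by
  unfold nuF
  split_ifs with ga gb gb
  · exact hne
  · intro h
    apply hprod
    rw [h, inv_mul_cancel₀ h0b]
  · intro h
    apply hprod
    rw [← h, mul_comm, inv_mul_cancel₀ h0a]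
  · intro h
    exact hne (inv_injective h)

lemma quad_finite (a b c : ℂ) (ha : a ≠ 0) :
    {x : ℂ | a * x ^ 2 + b * x + c = 0}.Finite := by
  have hp : (Polynomial.C a * Polynomial.X ^ 2 + Polynomial.C b * Polynomial.X
      + Polynomial.C c : Polynomial ℂ) ≠ 0 := by
    intro h
    have := congrArg (fun p => Polynomial.coeff p 2) h
    simp [Polynomial.coeff_X, Polynomial.coeff_C] at this
    exact ha this
  apply Set.Finite.subset (Polynomial.finite_setOf_isRoot hp)
  intro x hx
  simp only [Set.mem_setOf_eq, Polynomial.IsRoot, Polynomial.eval_add,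
    Polynomial.eval_mul, Polynomial.eval_pow, Polynomial.eval_C, Polynomial.eval_X]
  exact hx

lemma linear_finite (b c : ℂ) (hb : b ≠ 0) : {x : ℂ | b * x + c = 0}.Finite := by
  apply Set.Finite.subset (Set.finite_singleton (-c / b))
  intro x hx
  simp only [Set.mem_setOf_eq] at hx
  simp only [Set.mem_singleton_iff]
  field_simp
  linear_combination hx

def lamF (μ ε : ℂ) (n : ℕ) : ℂ := μ + ε * ((n : ℂ) + 1)

def Amat (k : ℕ) (μ : ℂ) (ε : ℂ) : Matrix (Fin (k + k)) (Fin (k + k)) ℂ :=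
  Matrix.reindex finSumFinEquiv finSumFinEquiv
    (Matrix.fromBlocks 0 1 (Cmat k (lamF μ ε)) 0)

lemma Amat_zero (k : ℕ) (μ : ℂ) : Amat k μ 0 = Hblock k μ := by
  unfold Amat Hblock
  congr 1
  congr 1
  ext i j
  simp [Cmat, Jblock, lamF]

lemma Amat_affine (k : ℕ) (μ : ℂ) (ε : ℂ) :
    Amat k μ ε = Amat k μ 0 + ε • (Amat k μ 1 - Amat k μ 0) := by
  ext i j
  simp only [Matrix.add_apply, Matrix.smul_apply, Matrix.sub_apply, smul_eq_mul]
  unfold Amat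
  rw [reindex_fromBlocks_apply, reindex_fromBlocks_apply, reindex_fromBlocks_apply]
  split_ifs with hi hj hj
  · simp
  · simp
  · simp only [Cmat, lamF, Matrix.of_apply]
    split_ifs <;> ring
  · simp

lemma Amat_tendsto (k : ℕ) (μ : ℂ) {f : ℕ → ℂ} (hf : Filter.Tendsto f Filter.atTop (nhds 0)) :
    Filter.Tendsto (fun n => Amat k μ (f n)) Filter.atTop (nhds (Hblock k μ)) := by
  have hcont : Continuous (fun ε => Amat k μ ε) := by
    have : (fun ε => Amat k μ ε) =
        fun ε => Amat k μ 0 + ε • (Amat k μ 1 - Amat k μ 0) := by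
      funext ε; exact Amat_affine k μ ε
    rw [this]
    fun_prop
  have := (hcont.tendsto 0).comp hf
  rwa [Amat_zero] at this


open Filter

/-- **Lemma 3.8(ii), congruence case.**  For `k ≥ 1` and `0 ≠ μ ≠ (-1)^(k+1)`, the
matrix `H_{2k}(μ)` belongs to the closure of the congruence bundle of a direct sum of
`k` pairwise distinct `2 × 2` Type II-(a) blocks. -/
theorem Hblock_mem_closure_congBundle (k : ℕ) (hk : 1 ≤ k) (μ : ℂ)
    (hμ0 : μ ≠ 0) (hμ1 : μ ≠ (-1) ^ (k + 1)) :
    ∃ h : finSize (fun _ : Fin k => 2) = k + k,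
      Hblock k μ ∈
        closure {A : Matrix (Fin (k + k)) (Fin (k + k)) ℂ |
          ∃ (mu : Fin k → ℂ) (P : Matrix (Fin (k + k)) (Fin (k + k)) ℂ),
            IsUnit P ∧ (∀ i, TypeIIaParam (mu i)) ∧
            (∀ i i', i ≠ i' → mu i ≠ mu i') ∧
            A = P * Matrix.reindex (finCongr h) (finCongr h) (pairH k mu) * Pᵀ} := by
  classical
  refine ⟨finSize_two k, ?_⟩
  set Bad : Set ℂ := (⋃ i ∈ Finset.range k, ⋃ j ∈ Finset.range k,
      {ε : ℂ | (μ + ε * ((i:ℂ)+1)) * (μ + ε * ((j:ℂ)+1)) = 1}) ∪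
    (⋃ i ∈ Finset.range k, {ε : ℂ | μ + ε * ((i:ℂ)+1) = 0}) with hBad
  have hBadFin : Bad.Finite := by
    apply Set.Finite.union
    · apply Set.Finite.biUnion (Finset.range k).finite_toSet
      intro i _
      apply Set.Finite.biUnion (Finset.range k).finite_toSet
      intro j _
      have ha : ((i:ℂ)+1) * ((j:ℂ)+1) ≠ 0 :=
        mul_ne_zero (Nat.cast_add_one_ne_zero i) (Nat.cast_add_one_ne_zero j)
      apply Set.Finite.subset
        (quad_finite (((i:ℂ)+1)*((j:ℂ)+1)) (μ*(((i:ℂ)+1)+((j:ℂ)+1))) (μ^2 - 1) ha)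
      intro x hx
      simp only [Set.mem_setOf_eq] at hx ⊢
      linear_combination hx
    · apply Set.Finite.biUnion (Finset.range k).finite_toSet
      intro i _
      apply Set.Finite.subset (linear_finite ((i:ℂ)+1) μ (Nat.cast_add_one_ne_zero i))
      intro x hx
      simp only [Set.mem_setOf_eq] at hx ⊢
      linear_combination hx
  have hchoice : ∀ n : ℕ, ∃ ε : ℂ, ε ∉ Bad ∧ ε ≠ 0 ∧ ‖ε‖ ≤ 1/((n:ℝ)+1) := by
    intro n
    have hIoo : (Set.Ioo (0:ℝ) (1/((n:ℝ)+1))).Infinite := Set.Ioo_infinite (by positivity)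
    have himg : ((fun t : ℝ => (t:ℂ)) '' Set.Ioo 0 (1/((n:ℝ)+1))).Infinite :=
      hIoo.image Complex.ofReal_injective.injOn
    have hne : (((fun t : ℝ => (t:ℂ)) '' Set.Ioo 0 (1/((n:ℝ)+1))) \ (Bad ∪ {0})).Nonempty :=
      (himg.diff (hBadFin.union (Set.finite_singleton 0))).nonempty
    obtain ⟨ε, ⟨⟨t, ht, rfl⟩, hε2⟩⟩ := hne
    refine ⟨t, fun h => hε2 (Or.inl h), Complex.ofReal_ne_zero.mpr (ne_of_gt ht.1), ?_⟩
    rw [Complex.norm_real, Real.norm_eq_abs, abs_of_pos ht.1]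
    exact ht.2.le
  choose εs hεs using hchoice
  have htend : Tendsto εs atTop (nhds 0) :=
    squeeze_zero_norm (fun n => (hεs n).2.2) tendsto_one_div_add_atTop_nhds_zero_nat
  apply mem_closure_of_tendsto (Amat_tendsto k μ htend)
  filter_upwards with n
  set ε := εs n with hε
  set lam := lamF μ ε with hlamdef
  have hε0 : ε ≠ 0 := (hεs n).2.1
  have hprod : ∀ i j, i < k → j < k → lam i * lam j ≠ 1 := by
    intro i j hi hj hcon
    apply (hεs n).1
    rw [hBad]
    left
    refine Set.mem_biUnion (Finset.mem_coe.mpr (Finset.mem_range.mpr hi)) ?_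
    refine Set.mem_biUnion (Finset.mem_coe.mpr (Finset.mem_range.mpr hj)) ?_
    exact hcon
  have hlam0 : ∀ a, a < k → lam a ≠ 0 := by
    intro a ha hcon
    apply (hεs n).1
    rw [hBad]
    right
    exact Set.mem_biUnion (Finset.mem_coe.mpr (Finset.mem_range.mpr ha)) hcon
  have hne1 : ∀ a, a < k → lam a ≠ 1 := by
    intro a ha h
    exact hprod a a ha ha (by rw [h]; ring)
  have hnem1 : ∀ a, a < k → lam a ≠ -1 := by
    intro a ha h
    exact hprod a a ha ha (by rw [h]; ring)
  have hd : ∀ i j, i < k → j < k → i ≠ j → lam i ≠ lam j := by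
    intro i j _ _ hij heq
    rw [hlamdef] at heq
    unfold lamF at heq
    have h2 : ε * ((i:ℂ)+1) = ε * ((j:ℂ)+1) := by linear_combination heq
    have h3 : ((i:ℂ)+1) = ((j:ℂ)+1) := mul_left_cancel₀ hε0 h2
    have h4 : (i : ℂ) = (j : ℂ) := by linear_combination h3
    exact hij (Nat.cast_injective h4)
  obtain ⟨P, hPu, hPeq⟩ := main_congruence k lam hd hlam0
  refine ⟨fun i => nuF lam (i : ℕ), P, hPu, ?_, ?_, ?_⟩
  · intro i
    exact nuF_typeIIa lam i (hlam0 _ i.isLt) (hne1 _ i.isLt) (hnem1 _ i.isLt)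
  · intro i i' hii
    exact nuF_inj lam i i' (hd _ _ i.isLt i'.isLt (fun hv => hii (Fin.ext hv)))
      (hlam0 _ i.isLt) (hlam0 _ i'.isLt) (hprod _ _ i.isLt i'.isLt)
  · rw [Mnu_eq_pairH k (nuF lam) (finSize_two k)]
    exact hPeq
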